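/- (Theorem 3, scaling of the outage capacity for the bounded path loss model.) Let α > 2, let M ≥ 1 be an integer, let ε ∈ (0,1) and ρ > 0, and set a = (α/2)(M−1). For each λ > 0, let y*(λ) be the unique y ∈ (1,∞) satisfying log( y^{a}(y−1) ) + (α/(2ρ))(y−1) = (α/2) log( b(λ) / (−log ε) ), where b(λ) = (2λπ/α) Γ(2/α) ρ^{2/α}. Then y*(λ) / (ρ log λ) → 1 as λ → ∞, and consequently log y*(λ) / log log λ → 1 as λ → ∞; i.e., the beam outage capacity C_out(ε) = log y*(λ) scales double-logarithmically in the user intensity λ. -/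

import Mathlib

open Real Filter

set_option maxHeartbeats 1600000 in
/-- Theorem 3 (scaling for the bounded path loss model): `y*(λ)/(ρ log λ) → 1` and hence
`log y*(λ) / log log λ → 1`, i.e. the outage capacity scales double-logarithmically in the
user intensity `λ`. -/
theorem outage_capacity_bounded_scaling
    (α : ℝ) (hα : 2 < α) (M : ℕ) (hM : 1 ≤ M) (ε ρ : ℝ)
    (hε : ε ∈ Set.Ioo (0 : ℝ) 1) (hρ : 0 < ρ)
    (a : ℝ) (ha : a = α / 2 * ((M : ℝ) - 1))
    (b : ℝ → ℝ) (hb : ∀ l, b l = 2 * l * π / α * Real.Gamma (2 / α) * ρ ^ (2 / α))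
    (ystar : ℝ → ℝ)
    (hy : ∀ l, 0 < l → ystar l ∈ Set.Ioi (1 : ℝ) ∧
        Real.log (ystar l ^ a * (ystar l - 1)) + α / (2 * ρ) * (ystar l - 1)
          = α / 2 * Real.log (b l / (-Real.log ε)))
    (huniq : ∀ l, 0 < l → ∀ y ∈ Set.Ioi (1 : ℝ),
        Real.log (y ^ a * (y - 1)) + α / (2 * ρ) * (y - 1)
          = α / 2 * Real.log (b l / (-Real.log ε)) → y = ystar l) :
    Tendsto (fun l => ystar l / (ρ * Real.log l)) atTop (nhds 1) ∧
    Tendsto (fun l => Real.log (ystar l) / Real.log (Real.log l)) atTop (nhds 1) := by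
  obtain ⟨hε0, hε1⟩ := hε
  have hα0 : (0:ℝ) < α := by linarith
  have hΓ : 0 < Real.Gamma (2 / α) := Real.Gamma_pos_of_pos (by positivity)
  have hrp : 0 < ρ ^ (2 / α) := Real.rpow_pos_of_pos hρ _
  set c : ℝ := 2 * π / α * Real.Gamma (2 / α) * ρ ^ (2 / α) with hc_def
  have hc : 0 < c := by
    have := Real.pi_pos
    positivity
  have hK : 0 < -Real.log ε := by
    have := Real.log_neg hε0 hε1; linarith
  have ha0 : 0 ≤ a := by
    have h1 : (1:ℝ) ≤ (M:ℝ) := by exact_mod_cast hM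
    rw [ha]; nlinarith
  set D : ℝ := Real.log c - Real.log (-Real.log ε) with hD_def
  -- the fixed point equation, rewritten
  have heq : ∀ l, 0 < l →
      a * Real.log (ystar l) + Real.log (ystar l - 1) + α / (2 * ρ) * (ystar l - 1)
        = α / 2 * (Real.log l + D) := by
    intro l hl
    obtain ⟨hy1, he⟩ := hy l hl
    have hy1' : (1:ℝ) < ystar l := hy1
    have h0 : (0:ℝ) < ystar l := by linarith
    have h1 : Real.log (ystar l ^ a * (ystar l - 1))
        = a * Real.log (ystar l) + Real.log (ystar l - 1) := by
      rw [Real.log_mul (by positivity) (by linarith), Real.log_rpow h0]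
    have hblc : b l = c * l := by rw [hb]; ring
    have h2 : Real.log (b l / (-Real.log ε)) = Real.log l + D := by
      rw [hblc, Real.log_div (by positivity) (ne_of_gt hK),
        Real.log_mul (ne_of_gt hc) (ne_of_gt hl), hD_def]
      ring
    rw [h1, h2] at he
    exact he
  clear_value D
  clear_value c
  clear hD_def hc_def
  -- ystar tends to infinity
  have hyinf : Tendsto ystar atTop atTop := by
    rw [tendsto_atTop]
    intro K
    set K' : ℝ := max K 2 with hK'
    have hK'2 : (2:ℝ) ≤ K' := le_max_right _ _
    set B : ℝ := a * Real.log K' + Real.log K' + α / (2 * ρ) * K' with hB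
    have hlog : ∀ᶠ l in atTop, 2 / α * (B + 1) - D ≤ Real.log l :=
      Real.tendsto_log_atTop.eventually_ge_atTop _
    filter_upwards [hlog, eventually_gt_atTop (0:ℝ)] with l hl1 hl0
    by_contra hcon
    push_neg at hcon
    have hy1 : (1:ℝ) < ystar l := (hy l hl0).1
    have hyK : ystar l < K' := lt_of_lt_of_le hcon (le_max_left _ _)
    have hbound : a * Real.log (ystar l) + Real.log (ystar l - 1)
        + α / (2 * ρ) * (ystar l - 1) ≤ B := by
      have h1 : Real.log (ystar l) ≤ Real.log K' :=
        Real.log_le_log (by linarith) hyK.le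
      have h2 : Real.log (ystar l - 1) ≤ Real.log K' :=
        Real.log_le_log (by linarith) (by linarith)
      have h3 : α / (2 * ρ) * (ystar l - 1) ≤ α / (2 * ρ) * K' := by
        apply mul_le_mul_of_nonneg_left (by linarith) (by positivity)
      have h4 : a * Real.log (ystar l) ≤ a * Real.log K' :=
        mul_le_mul_of_nonneg_left h1 ha0
      rw [hB]; linarith
    have h5 : 2 / α * (B + 1) ≤ Real.log l + D := by linarith
    have h6 : B + 1 ≤ α / 2 * (Real.log l + D) := by
      calc B + 1 = α / 2 * (2 / α * (B + 1)) := by field_simp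
        _ ≤ α / 2 * (Real.log l + D) :=
          mul_le_mul_of_nonneg_left h5 (by positivity)
    linarith [heq l hl0]
  -- eventual upper bound on ystar
  have hup : ∀ᶠ l in atTop, ystar l ≤ ρ * Real.log l + (ρ * D + 1) := by
    filter_upwards [hyinf.eventually_ge_atTop 2, eventually_gt_atTop (0:ℝ)] with l h2 hl0
    have hL0 : 0 ≤ Real.log (ystar l) := Real.log_nonneg (by linarith)
    have hG0 : 0 ≤ Real.log (ystar l - 1) := Real.log_nonneg (by linarith)
    have hS : 0 ≤ a * Real.log (ystar l) + Real.log (ystar l - 1) := by nlinarith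
    have h1 : α / (2 * ρ) * (ystar l - 1) ≤ α / 2 * (Real.log l + D) := by
      linarith [heq l hl0]
    have h3 := mul_le_mul_of_nonneg_left h1 (by positivity : (0:ℝ) ≤ 2 * ρ / α)
    have e1 : 2 * ρ / α * (α / (2 * ρ) * (ystar l - 1)) = ystar l - 1 := by
      field_simp
    have e2 : 2 * ρ / α * (α / 2 * (Real.log l + D)) = ρ * (Real.log l + D) := by
      field_simp
    rw [e1, e2] at h3
    linarith
  -- log log / log tends to 0
  have hloglog : Tendsto (fun l : ℝ => Real.log (Real.log l)) atTop atTop :=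
    Real.tendsto_log_atTop.comp Real.tendsto_log_atTop
  have hlogdiv : Tendsto (fun l : ℝ => Real.log (Real.log l) / Real.log l) atTop (nhds 0) :=
    (Real.isLittleO_log_id_atTop.tendsto_div_nhds_zero).comp Real.tendsto_log_atTop
  -- S l / log l → 0 where S l = a log (ystar l) + log (ystar l - 1)
  have hSdiv : Tendsto
      (fun l => (a * Real.log (ystar l) + Real.log (ystar l - 1)) / Real.log l)
      atTop (nhds 0) := by
    have hev1 : ∀ᶠ l in atTop, ρ * Real.log l + (ρ * D + 1) ≤ Real.log l ^ 2 := by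
      filter_upwards [Real.tendsto_log_atTop.eventually_ge_atTop (ρ + |ρ * D + 1| + 1)]
        with l hl
      have h1 : (1:ℝ) ≤ Real.log l := by
        have : (0:ℝ) ≤ |ρ * D + 1| := abs_nonneg _
        linarith
      nlinarith [le_abs_self (ρ * D + 1), abs_nonneg (ρ * D + 1)]
    have hub : ∀ᶠ l in atTop,
        (a * Real.log (ystar l) + Real.log (ystar l - 1)) / Real.log l
          ≤ (2 * (a + 1)) * (Real.log (Real.log l) / Real.log l) := by
      filter_upwards [hyinf.eventually_ge_atTop 2, hup, hev1,
        Real.tendsto_log_atTop.eventually_ge_atTop 1] with l h2 hupl hsq hl1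
      have hll0 : 0 < Real.log l := by linarith
      have hy0 : (0:ℝ) < ystar l := by linarith
      have hly : Real.log (ystar l) ≤ Real.log (Real.log l ^ 2) :=
        Real.log_le_log hy0 (by linarith)
      rw [Real.log_pow] at hly
      push_cast at hly
      have hll : 0 ≤ Real.log (Real.log l) := Real.log_nonneg hl1
      have hG : Real.log (ystar l - 1) ≤ Real.log (ystar l) :=
        Real.log_le_log (by linarith) (by linarith)
      have hSub : a * Real.log (ystar l) + Real.log (ystar l - 1)
          ≤ (2 * (a + 1)) * Real.log (Real.log l) := by
        have hla : a * Real.log (ystar l) ≤ a * (2 * Real.log (Real.log l)) :=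
          mul_le_mul_of_nonneg_left (by linarith) ha0
        nlinarith
      calc (a * Real.log (ystar l) + Real.log (ystar l - 1)) / Real.log l
          ≤ 2 * (a + 1) * Real.log (Real.log l) / Real.log l := by gcongr
        _ = 2 * (a + 1) * (Real.log (Real.log l) / Real.log l) := by ring
    have hlb : ∀ᶠ l in atTop,
        0 ≤ (a * Real.log (ystar l) + Real.log (ystar l - 1)) / Real.log l := by
      filter_upwards [hyinf.eventually_ge_atTop 2,
        Real.tendsto_log_atTop.eventually_ge_atTop 1] with l h2 hl1
      have hL0 : 0 ≤ Real.log (ystar l) := Real.log_nonneg (by linarith)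
      have hG0 : 0 ≤ Real.log (ystar l - 1) := Real.log_nonneg (by linarith)
      have : 0 ≤ a * Real.log (ystar l) + Real.log (ystar l - 1) := by nlinarith
      positivity
    have hglim : Tendsto (fun l : ℝ => (2 * (a + 1)) * (Real.log (Real.log l) / Real.log l))
        atTop (nhds 0) := by
      have h := hlogdiv.const_mul (2 * (a + 1))
      simp only [mul_zero] at h
      exact h
    exact squeeze_zero' hlb hub hglim
  have hinv : Tendsto (fun l : ℝ => (Real.log l)⁻¹) atTop (nhds 0) :=
    tendsto_inv_atTop_zero.comp Real.tendsto_log_atTop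
  -- main limit
  have hmain : Tendsto (fun l => ystar l / (ρ * Real.log l)) atTop (nhds 1) := by
    have key : ∀ᶠ l in atTop, ystar l / (ρ * Real.log l)
        = 1 + (ρ * D + 1) / ρ * (Real.log l)⁻¹
          - 2 / α * ((a * Real.log (ystar l) + Real.log (ystar l - 1)) / Real.log l) := by
      filter_upwards [eventually_gt_atTop (0:ℝ),
        Real.tendsto_log_atTop.eventually_gt_atTop 0] with l hl0 hll
      have he := heq l hl0
      set L : ℝ := Real.log l with hL
      set S : ℝ := a * Real.log (ystar l) + Real.log (ystar l - 1) with hS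
      have hρne : ρ ≠ 0 := ne_of_gt hρ
      have hLne : L ≠ 0 := ne_of_gt hll
      have hαne : α ≠ 0 := ne_of_gt hα0
      have h1 : α / (2 * ρ) * (ystar l - 1) = α / 2 * (L + D) - S := by linarith
      have h2 : ystar l - 1 = 2 * ρ / α * (α / 2 * (L + D) - S) := by
        rw [← h1]; field_simp
      have h3 : ystar l = ρ * L + (ρ * D + 1) - 2 * ρ / α * S := by
        have e : 2 * ρ / α * (α / 2 * (L + D) - S) = ρ * (L + D) - 2 * ρ / α * S := by
          field_simp
        rw [e] at h2; linarith
      rw [h3]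
      field_simp
    have hlim : Tendsto (fun l => 1 + (ρ * D + 1) / ρ * (Real.log l)⁻¹
        - 2 / α * ((a * Real.log (ystar l) + Real.log (ystar l - 1)) / Real.log l))
        atTop (nhds 1) := by
      have h := ((tendsto_const_nhds (x := (1:ℝ)) (f := atTop)).add
        (hinv.const_mul ((ρ * D + 1) / ρ))).sub (hSdiv.const_mul (2 / α))
      simp only [mul_zero, add_zero, sub_zero] at h
      exact h
    exact hlim.congr' (key.mono fun l h => h.symm)
  refine ⟨hmain, ?_⟩
  -- second limit
  have hloggl : Tendsto (fun l => Real.log (ystar l / (ρ * Real.log l))) atTop (nhds 0) := by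
    have h := (Real.continuousAt_log one_ne_zero).tendsto.comp hmain
    simpa [Function.comp_def, Real.log_one] using h
  have hinvll : Tendsto (fun l : ℝ => (Real.log (Real.log l))⁻¹) atTop (nhds 0) :=
    tendsto_inv_atTop_zero.comp hloglog
  have key2 : ∀ᶠ l in atTop, Real.log (ystar l) / Real.log (Real.log l)
      = Real.log (ystar l / (ρ * Real.log l)) * (Real.log (Real.log l))⁻¹
        + Real.log ρ * (Real.log (Real.log l))⁻¹ + 1 := by
    filter_upwards [hyinf.eventually_ge_atTop 2,
      Real.tendsto_log_atTop.eventually_gt_atTop 1,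
      hloglog.eventually_gt_atTop 0] with l h2 hl1 hll0
    have hll : 0 < Real.log l := by linarith
    have hy0 : (0:ℝ) < ystar l := by linarith
    have hne : Real.log (Real.log l) ≠ 0 := ne_of_gt hll0
    have hsplit : Real.log (ystar l)
        = Real.log (ystar l / (ρ * Real.log l)) + Real.log ρ + Real.log (Real.log l) := by
      rw [Real.log_div (ne_of_gt hy0) (by positivity),
        Real.log_mul (ne_of_gt hρ) (ne_of_gt hll)]
      ring
    rw [hsplit]
    field_simp
  have hlim2 : Tendsto (fun l => Real.log (ystar l / (ρ * Real.log l))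
      * (Real.log (Real.log l))⁻¹ + Real.log ρ * (Real.log (Real.log l))⁻¹ + 1)
      atTop (nhds 1) := by
    have h := ((hloggl.mul hinvll).add (hinvll.const_mul (Real.log ρ))).add
      (tendsto_const_nhds (x := (1:ℝ)) (f := atTop))
    simp only [zero_mul, mul_zero, add_zero, zero_add] at h
    exact h
  exact hlim2.congr' (key2.mono fun l h => h.symm)
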